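/- Let ℏ > 0, let D ∈ ℂ with D ≠ 0, and let δ ∈ ℂ be a square root of D. Define f(t,x) = (1/cos(ℏδt))·exp((tan(ℏδt)/(ℏδ))·x) for all t ∈ ℂ with cos(ℏδt) ≠ 0 and all x ∈ ℂ. Then f(0,x) = 1 for all x, the formula is independent of the choice of square root δ, and f satisfies the partial differential equation ∂_t f(t,x) = x·f(t,x) + ℏ²D·(∂_x f(t,x) + x·∂²_x f(t,x)) wherever it is defined. -/

import Mathlib

/-- The Weyl ordered expression of the star-exponential of a quadratic form with
discriminant `D = δ²`, as a function of `t` and `x = aũ² + bṽ² + 2cũṽ`. -/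
noncomputable def weylExpQuad (ℏ : ℝ) (δ t x : ℂ) : ℂ :=
  (Complex.cos (ℏ * δ * t))⁻¹ * Complex.exp ((Complex.tan (ℏ * δ * t) / (ℏ * δ)) * x)

lemma weyl_derivx (c k : ℂ) (x : ℂ) :
    deriv (fun y => c * Complex.exp (k * y)) x = c * k * Complex.exp (k * x) := by
  have h : HasDerivAt (fun y => c * Complex.exp (k * y))
      (c * (Complex.exp (k * x) * k)) x :=
    by simpa using (((hasDerivAt_id x).const_mul k).cexp).const_mul c
  rw [h.deriv]; ring

theorem statement9 (ℏ : ℝ) (hℏ : 0 < ℏ) (D δ : ℂ) (hD : D ≠ 0) (hδ : δ ^ 2 = D) :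
    (∀ x : ℂ, weylExpQuad ℏ δ 0 x = 1) ∧
    (∀ δ' : ℂ, δ' ^ 2 = D → ∀ t x : ℂ, weylExpQuad ℏ δ' t x = weylExpQuad ℏ δ t x) ∧
    (∀ t x : ℂ, Complex.cos (ℏ * δ * t) ≠ 0 →
      HasDerivAt (fun s => weylExpQuad ℏ δ s x)
        (x * weylExpQuad ℏ δ t x + (ℏ : ℂ) ^ 2 * D *
          (deriv (fun y => weylExpQuad ℏ δ t y) x +
            x * deriv (deriv (fun y => weylExpQuad ℏ δ t y)) x)) t) := by
  have hδ0 : δ ≠ 0 := by rintro rfl; simp at hδ; exact hD hδ.symm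
  have hℏ0 : (ℏ : ℂ) ≠ 0 := by exact_mod_cast hℏ.ne'
  have ha : (ℏ : ℂ) * δ ≠ 0 := mul_ne_zero hℏ0 hδ0
  refine ⟨?_, ?_, ?_⟩
  · intro x; simp [weylExpQuad]
  · intro δ' hδ' t x
    have h : (δ' - δ) * (δ' + δ) = 0 := by
      have : δ' ^ 2 = δ ^ 2 := by rw [hδ', hδ]
      linear_combination this
    rcases mul_eq_zero.1 h with h | h
    · rw [sub_eq_zero.1 h]
    · have : δ' = -δ := eq_neg_of_add_eq_zero_left h
      subst this
      simp [weylExpQuad, mul_neg, neg_mul, Complex.cos_neg, Complex.tan_neg,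
        neg_div_neg_eq]
  · intro t x hcos
    set a : ℂ := (ℏ : ℂ) * δ with ha_def
    -- derivatives in x
    have hfx : (fun y => weylExpQuad ℏ δ t y) =
        fun y => (Complex.cos (a * t))⁻¹ * Complex.exp ((Complex.tan (a * t) / a) * y) := by
      rfl
    have hd1 : deriv (fun y => weylExpQuad ℏ δ t y) x =
        (Complex.cos (a * t))⁻¹ * (Complex.tan (a * t) / a) *
          Complex.exp ((Complex.tan (a * t) / a) * x) := by
      rw [hfx, weyl_derivx]
    have hd2 : deriv (deriv (fun y => weylExpQuad ℏ δ t y)) x =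
        (Complex.cos (a * t))⁻¹ * (Complex.tan (a * t) / a) * (Complex.tan (a * t) / a) *
          Complex.exp ((Complex.tan (a * t) / a) * x) := by
      have : deriv (fun y => weylExpQuad ℏ δ t y) =
          fun y => ((Complex.cos (a * t))⁻¹ * (Complex.tan (a * t) / a)) *
            Complex.exp ((Complex.tan (a * t) / a) * y) := by
        funext y
        rw [hfx, weyl_derivx]
      rw [this, weyl_derivx]
    -- derivative in t
    have hat : HasDerivAt (fun s : ℂ => a * s) a t := by
      simpa using (hasDerivAt_id t).const_mul a
    have hcosd : HasDerivAt (fun s : ℂ => Complex.cos (a * s))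
        (-Complex.sin (a * t) * a) t := (Complex.hasDerivAt_cos (a * t)).comp t hat
    have hinv : HasDerivAt (fun s : ℂ => (Complex.cos (a * s))⁻¹)
        (-(-Complex.sin (a * t) * a) / (Complex.cos (a * t)) ^ 2) t := hcosd.inv hcos
    have htand : HasDerivAt (fun s : ℂ => Complex.tan (a * s))
        (1 / Complex.cos (a * t) ^ 2 * a) t :=
      (Complex.hasDerivAt_tan hcos).comp t hat
    have harg : HasDerivAt (fun s : ℂ => Complex.tan (a * s) / a * x)
        (1 / Complex.cos (a * t) ^ 2 * a / a * x) t := (htand.div_const a).mul_const x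
    have hexp : HasDerivAt (fun s : ℂ => Complex.exp (Complex.tan (a * s) / a * x))
        (Complex.exp (Complex.tan (a * t) / a * x) *
          (1 / Complex.cos (a * t) ^ 2 * a / a * x)) t := harg.cexp
    have hmain : HasDerivAt (fun s => weylExpQuad ℏ δ s x)
        ((-(-Complex.sin (a * t) * a) / (Complex.cos (a * t)) ^ 2) *
          Complex.exp (Complex.tan (a * t) / a * x) +
          (Complex.cos (a * t))⁻¹ *
            (Complex.exp (Complex.tan (a * t) / a * x) *
              (1 / Complex.cos (a * t) ^ 2 * a / a * x))) t := hinv.mul hexp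
    convert hmain using 1
    have haa : (ℏ : ℂ) ^ 2 * D = a ^ 2 := by rw [ha_def, ← hδ]; ring
    rw [weylExpQuad, ← ha_def, haa]
    clear_value a
    have hs : Complex.sin (a * t) = Complex.tan (a * t) * Complex.cos (a * t) := by
      rw [Complex.tan_eq_sin_div_cos]; field_simp
    have h2 : (1 : ℂ) / Complex.cos (a * t) ^ 2 = Complex.tan (a * t) ^ 2 + 1 := by
      rw [Complex.tan_eq_sin_div_cos]
      field_simp
      exact (Complex.sin_sq_add_cos_sq _).symm
    rw [hd1, hd2, hs, h2]
    have hai : a * a⁻¹ = 1 := mul_inv_cancel₀ ha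
    have hci : Complex.cos (a * t) * (Complex.cos (a * t))⁻¹ = 1 := mul_inv_cancel₀ hcos
    field_simp [hcos]
    ring_nf
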